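/- Consider a controlled Markov process with a deterministic transition function f : S × A → S, a horizon T ≥ 1, a time t < T, and a prefix trajectory h_t of length t ending in state s_t. Let H* be the maximum of H(d_{h_t ⊕ h'}) over all feasible length-(T−t) continuations h' from s_t, assume there is a unique action a* such that some continuation with first action a* attains H*, assume some feasible continuation has first action different from a*, and let H*_2 be the maximum of H(d_{h_t ⊕ h'}) over feasible continuations whose first action is not a*. Then every Markovian policy π_M satisfies the regret-to-go lower bound R_{T−t}(π_M, h_t) ≥ (H* − H*_2) · (1 − π_M(a*|s_t, t)). -/

import Mathlib

open scoped BigOperators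

/-- A controlled Markov process over finite state space `S` and action space `A`:
a transition kernel `P` and an initial distribution `μ`. -/
structure CMP (S A : Type) [Fintype S] [Fintype A] where
  P : S → A → S → ℝ
  P_nonneg : ∀ s a s', 0 ≤ P s a s'
  P_sum_one : ∀ s a, ∑ s', P s a s' = 1
  μ : S → ℝ
  μ_nonneg : ∀ s, 0 ≤ μ s
  μ_sum_one : ∑ s, μ s = 1

/-- A history of `t` steps: states `s_0, …, s_t` and actions `a_0, …, a_{t-1}`. -/
abbrev Hist (S A : Type) (t : ℕ) : Type := (Fin (t + 1) → S) × (Fin t → A)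

/-- A continuation of `k` further steps: actions `a_0, …, a_{k-1}` together with the
states those actions lead to. -/
abbrev Contin (S A : Type) (k : ℕ) : Type := (Fin k → A) × (Fin k → S)

/-- A general (possibly non-Markovian, possibly randomized) policy: for every time `t`
and history of length `t`, a probability distribution over actions. -/
structure Policy (S A : Type) [Fintype A] where
  p : ∀ t : ℕ, Hist S A t → A → ℝ
  nonneg : ∀ t h a, 0 ≤ p t h a
  sum_one : ∀ t h, ∑ a, p t h a = 1

/-- A Markovian (randomized, time-dependent) policy: for every time `t` and current
state `s`, a probability distribution over actions. -/
structure MPolicy (S A : Type) [Fintype A] where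
  p : ℕ → S → A → ℝ
  nonneg : ∀ t s a, 0 ≤ p t s a
  sum_one : ∀ t s, ∑ a, p t s a = 1

/-- The last (current) state of a history. -/
def lastState {S A : Type} {t : ℕ} (h : Hist S A t) : S := h.1 (Fin.last t)

/-- A Markovian policy viewed as a general policy. -/
def MPolicy.toPolicy {S A : Type} [Fintype A] (m : MPolicy S A) : Policy S A where
  p := fun t h a => m.p t (lastState h) a
  nonneg := fun t h a => m.nonneg t _ a
  sum_one := fun t h => m.sum_one t _

/-- The general policy induced by a deterministic non-Markovian policy
(a function from histories to actions). -/
def detPolicy {S A : Type} [Fintype A] [DecidableEq A] (f : ∀ t : ℕ, Hist S A t → A) :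
    Policy S A where
  p := fun t h a => if a = f t h then 1 else 0
  nonneg := by intro t h a; (try dsimp only); split <;> norm_num
  sum_one := by intro t h; simp

/-- The length-`i` prefix of a history. -/
def histTake {S A : Type} {t : ℕ} (h : Hist S A t) (i : ℕ) (hi : i ≤ t) : Hist S A i :=
  (fun j => h.1 ⟨(j : ℕ), by have := j.isLt; omega⟩,
   fun j => h.2 ⟨(j : ℕ), by have := j.isLt; omega⟩)

/-- The probability that policy `π` generates the history `h` when interacting with
the CMP `M` (initial state from `μ`, actions from `π`, transitions from `P`). -/
noncomputable def histProb {S A : Type} [Fintype S] [Fintype A]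
    (M : CMP S A) (π : Policy S A) {t : ℕ} (h : Hist S A t) : ℝ :=
  M.μ (h.1 0) * ∏ i : Fin t,
    (π.p i (histTake h i (Nat.le_of_lt i.isLt)) (h.2 i) *
      M.P (h.1 i.castSucc) (h.2 i) (h.1 i.succ))

/-- The `t`-step state distribution `d_t^π(s) = Pr(s_t = s)`. -/
noncomputable def stateDist {S A : Type} [Fintype S] [Fintype A] [DecidableEq S]
    (M : CMP S A) (π : Policy S A) (t : ℕ) (s : S) : ℝ :=
  ∑ h : Hist S A t, if lastState h = s then histProb M π h else 0

/-- Shannon entropy of a distribution on a finite set (`0 log 0 = 0` since `Real.log 0 = 0`). -/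
noncomputable def entropy {S : Type} [Fintype S] (d : S → ℝ) : ℝ :=
  -∑ s, d s * Real.log (d s)

/-- The state visitation frequency of a trajectory with `n+1` states. -/
noncomputable def visitFreq {S A : Type} [Fintype S] [DecidableEq S] {n : ℕ}
    (h : Hist S A n) (s : S) : ℝ :=
  (∑ i : Fin (n + 1), if h.1 i = s then (1 : ℝ) else 0) / ((n : ℝ) + 1)

/-- The marginal state distribution `d_T^π(s) = (1/T) ∑_{t<T} d_t^π(s)`. -/
noncomputable def marginalDist {S A : Type} [Fintype S] [Fintype A] [DecidableEq S]
    (M : CMP S A) (π : Policy S A) (T : ℕ) (s : S) : ℝ :=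
  (1 / (T : ℝ)) * ∑ t ∈ Finset.range T, stateDist M π t s

/-- The `γ`-discounted state distribution `d_γ^π(s) = (1-γ) ∑_t γ^t d_t^π(s)`. -/
noncomputable def discountedDist {S A : Type} [Fintype S] [Fintype A] [DecidableEq S]
    (M : CMP S A) (π : Policy S A) (γ : ℝ) (s : S) : ℝ :=
  (1 - γ) * ∑' t : ℕ, γ ^ t * stateDist M π t s

/-- Concatenation of a length-`t` history with a `k`-step continuation. -/
def histAppend {S A : Type} {t k : ℕ} (h : Hist S A t) (c : Contin S A k) : Hist S A (t + k) :=
  (fun j => if hj : (j : ℕ) ≤ t then h.1 ⟨(j : ℕ), by omega⟩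
            else c.2 ⟨(j : ℕ) - t - 1, by have := j.isLt; omega⟩,
   fun j => if hj : (j : ℕ) < t then h.2 ⟨(j : ℕ), hj⟩
            else c.1 ⟨(j : ℕ) - t, by have := j.isLt; omega⟩)

/-- The probability that, after the prefix history `h`, running `π` (conditioned on the
full history) produces the `k`-step continuation `c`. -/
noncomputable def contProb {S A : Type} [Fintype S] [Fintype A]
    (M : CMP S A) (π : Policy S A) {t k : ℕ} (h : Hist S A t) (c : Contin S A k) : ℝ :=
  ∏ i : Fin k,
    (π.p (t + (i : ℕ))
        (histTake (histAppend h c) (t + (i : ℕ)) (by have := i.isLt; omega))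
        ((histAppend h c).2 ⟨t + (i : ℕ), by have := i.isLt; omega⟩) *
      M.P ((histAppend h c).1 ⟨t + (i : ℕ), by have := i.isLt; omega⟩)
        ((histAppend h c).2 ⟨t + (i : ℕ), by have := i.isLt; omega⟩)
        ((histAppend h c).1 ⟨t + (i : ℕ) + 1, by have := i.isLt; omega⟩))

/-- The expected entropy of the state visitation frequency of the completed trajectory,
when running `π` for `k` further steps after the prefix history `h`. -/
noncomputable def expEntFrom {S A : Type} [Fintype S] [Fintype A] [DecidableEq S]
    (M : CMP S A) (π : Policy S A) {t : ℕ} (k : ℕ) (h : Hist S A t) : ℝ :=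
  ∑ c : Contin S A k, contProb M π h c * entropy (visitFreq (histAppend h c))

/-- A history has positive probability (under some policy) iff its initial state and all
its transitions have positive probability. -/
def Reachable {S A : Type} [Fintype S] [Fintype A] (M : CMP S A) {t : ℕ}
    (h : Hist S A t) : Prop :=
  0 < M.μ (h.1 0) ∧ ∀ i : Fin t, 0 < M.P (h.1 i.castSucc) (h.2 i) (h.1 i.succ)

/-- In a CMP with deterministic transition function `f`, a continuation `c` after the
prefix `h` is feasible if each of its states is obtained from the previous state and
the chosen action via `f`. -/
def FeasibleCont {S A : Type} (f : S → A → S) {t k : ℕ}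
    (h : Hist S A t) (c : Contin S A k) : Prop :=
  ∀ i : Fin k,
    (histAppend h c).1 ⟨t + (i : ℕ) + 1, by have := i.isLt; omega⟩
      = f ((histAppend h c).1 ⟨t + (i : ℕ), by have := i.isLt; omega⟩)
          ((histAppend h c).2 ⟨t + (i : ℕ), by have := i.isLt; omega⟩)

def ctail {S A : Type} {k : ℕ} (c : Contin S A (k + 1)) : Contin S A k :=
  (fun i => c.1 i.succ, fun i => c.2 i.succ)

def prevSt {S A : Type} {k : ℕ} (s : S) (c : Contin S A k) (i : Fin k) : S :=
  if _h0 : (i : ℕ) = 0 then s else c.2 ⟨(i : ℕ) - 1, by have := i.isLt; omega⟩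

noncomputable def Gfun {S A : Type} [Fintype S] [Fintype A] (M : CMP S A) (πM : MPolicy S A)
    (t : ℕ) (s : S) {k : ℕ} (c : Contin S A k) : ℝ :=
  ∏ i : Fin k,
    (πM.p (t + (i : ℕ)) (prevSt s c i) (c.1 i) * M.P (prevSt s c i) (c.1 i) (c.2 i))

lemma Gfun_succ {S A : Type} [Fintype S] [Fintype A] (M : CMP S A) (πM : MPolicy S A)
    (t : ℕ) (s : S) {k : ℕ} (c : Contin S A (k + 1)) :
    Gfun M πM t s c
      = πM.p t s (c.1 0) * M.P s (c.1 0) (c.2 0) * Gfun M πM (t + 1) (c.2 0) (ctail c) := by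
  unfold Gfun
  rw [Fin.prod_univ_succ]
  have hhead : πM.p (t + ((0 : Fin (k + 1)) : ℕ)) (prevSt s c 0) (c.1 0)
      * M.P (prevSt s c 0) (c.1 0) (c.2 0)
      = πM.p t s (c.1 0) * M.P s (c.1 0) (c.2 0) := by simp [prevSt]
  rw [hhead]
  congr 1
  apply Finset.prod_congr rfl
  intro i _
  have h1 : prevSt s c i.succ = prevSt (c.2 0) (ctail c) i := by
    by_cases h0 : (i : ℕ) = 0
    · rw [prevSt, dif_neg (show ¬((i.succ : Fin (k + 1)) : ℕ) = 0 by simp), prevSt, dif_pos h0]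
      exact congrArg c.2 (Fin.ext (by simp only [Fin.val_succ, Fin.val_zero, Fin.val_mk]; omega))
    · rw [prevSt, dif_neg (show ¬((i.succ : Fin (k + 1)) : ℕ) = 0 by simp), prevSt, dif_neg h0]
      exact congrArg c.2 (Fin.ext (by simp only [Fin.val_succ, Fin.val_mk]; omega))
  have h2 : t + ((i.succ : Fin (k + 1)) : ℕ) = t + 1 + (i : ℕ) := by simp; omega
  rw [h1, h2]
  rfl

lemma sum_contin_cons {S A : Type} [Fintype S] [Fintype A] {k : ℕ}
    (F : Contin S A (k + 1) → ℝ) :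
    ∑ c, F c = ∑ a : A, ∑ s0 : S, ∑ c : Contin S A k,
      F (Fin.cons a c.1, Fin.cons s0 c.2) := by
  rw [Fintype.sum_prod_type]
  rw [← Fintype.sum_equiv (Fin.consEquiv (fun _ => A))
    (fun p => ∑ y : Fin (k + 1) → S, F (Fin.consEquiv (fun _ => A) p, y)) _ (fun p => rfl)]
  rw [Fintype.sum_prod_type]
  have hce : ∀ (a : A) (x : Fin k → A),
      (Fin.consEquiv (fun _ => A)) (a, x) = Fin.cons a x := fun _ _ => rfl
  simp only [hce]
  apply Finset.sum_congr rfl; intro a _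
  have hy : ∀ x : Fin k → A, ∑ y : Fin (k + 1) → S, F (Fin.cons a x, y)
      = ∑ s0 : S, ∑ g : Fin k → S, F (Fin.cons a x, Fin.cons s0 g) := by
    intro x
    rw [← Fintype.sum_equiv (Fin.consEquiv (fun _ => S))
      (fun p => F (Fin.cons a x, Fin.consEquiv (fun _ => S) p)) _ (fun p => rfl),
      Fintype.sum_prod_type]
    rfl
  simp only [hy]
  rw [Finset.sum_comm]
  apply Finset.sum_congr rfl; intro s0 _
  exact (Fintype.sum_prod_type
    (fun q : (Fin k → A) × (Fin k → S) => F (Fin.cons a q.1, Fin.cons s0 q.2))).symm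

lemma Gfun_sum {S A : Type} [Fintype S] [Fintype A] (M : CMP S A) (πM : MPolicy S A) :
    ∀ (k t : ℕ) (s : S), ∑ c : Contin S A k, Gfun M πM t s c = 1 := by
  intro k
  induction k with
  | zero =>
    intro t s
    rw [Fintype.sum_eq_single (default : Contin S A 0)]
    · simp [Gfun]
    · intro x hx
      exact absurd (Subsingleton.elim x default) hx
  | succ k ih =>
    intro t s
    rw [sum_contin_cons]
    have key : ∀ (a : A) (s0 : S) (c : Contin S A k),
        Gfun M πM t s (Fin.cons a c.1, Fin.cons s0 c.2)
          = πM.p t s a * M.P s a s0 * Gfun M πM (t + 1) s0 c := by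
      intro a s0 c
      rw [Gfun_succ]
      simp [ctail]
    simp only [key]
    simp only [← Finset.mul_sum]
    simp only [ih, mul_one]
    simp only [← Finset.mul_sum, M.P_sum_one, mul_one, πM.sum_one]

lemma Gfun_first {S A : Type} [Fintype S] [Fintype A] (M : CMP S A) (πM : MPolicy S A)
    (t : ℕ) (s : S) {k : ℕ} (w : A → ℝ) :
    ∑ c : Contin S A (k + 1), w (c.1 0) * Gfun M πM t s c = ∑ a, πM.p t s a * w a := by
  rw [sum_contin_cons]
  have key : ∀ (a : A) (s0 : S) (c : Contin S A k),
      w ((Fin.cons a c.1 : Fin (k+1) → A) 0) * Gfun M πM t s (Fin.cons a c.1, Fin.cons s0 c.2)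
        = w a * (πM.p t s a * M.P s a s0 * Gfun M πM (t + 1) s0 c) := by
    intro a s0 c
    rw [Gfun_succ]
    simp [ctail]
  simp only [key]
  simp only [← Finset.mul_sum]
  simp only [Gfun_sum M πM k (t + 1), mul_one]
  simp only [← Finset.mul_sum, M.P_sum_one, mul_one]
  apply Finset.sum_congr rfl; intro a _; ring

lemma contProb_eq_Gfun {S A : Type} [Fintype S] [Fintype A]
    (M : CMP S A) (πM : MPolicy S A) {t k : ℕ} (h : Hist S A t) (c : Contin S A k) :
    contProb M πM.toPolicy h c = Gfun M πM t (lastState h) c := by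
  unfold contProb Gfun
  apply Finset.prod_congr rfl
  intro i _
  have hstate : (histAppend h c).1 ⟨t + (i : ℕ), by have := i.isLt; omega⟩
      = prevSt (lastState h) c i := by
    by_cases h0 : (i : ℕ) = 0
    · rw [histAppend]
      dsimp only
      rw [dif_pos (by omega), prevSt, dif_pos h0]
      exact congrArg h.1 (Fin.ext (by simp [h0, lastState]))
    · rw [histAppend]
      dsimp only
      rw [dif_neg (by omega), prevSt, dif_neg h0]
      exact congrArg c.2 (Fin.ext (by simp only [Fin.val_mk]; omega))
  have haction : (histAppend h c).2 ⟨t + (i : ℕ), by have := i.isLt; omega⟩ = c.1 i := by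
    rw [histAppend]
    dsimp only
    rw [dif_neg (by omega)]
    exact congrArg c.1 (Fin.ext (by simp))
  have hnext : (histAppend h c).1 ⟨t + (i : ℕ) + 1, by have := i.isLt; omega⟩ = c.2 i := by
    rw [histAppend]
    dsimp only
    rw [dif_neg (by omega)]
    exact congrArg c.2 (Fin.ext (by simp only [Fin.val_mk]; omega))
  have hlast : lastState (histTake (histAppend h c) (t + (i : ℕ))
        (by have := i.isLt; omega))
      = (histAppend h c).1 ⟨t + (i : ℕ), by have := i.isLt; omega⟩ := rfl
  show πM.p (t + (i : ℕ)) (lastState (histTake _ _ _)) _ * _ = _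
  rw [hlast, hstate, haction, hnext]

lemma contProb_nonneg {S A : Type} [Fintype S] [Fintype A]
    (M : CMP S A) (π : Policy S A) {t k : ℕ} (h : Hist S A t) (c : Contin S A k) :
    0 ≤ contProb M π h c := by
  unfold contProb
  exact Finset.prod_nonneg fun i _ => mul_nonneg (π.nonneg _ _ _) (M.P_nonneg _ _ _)

lemma contProb_feasible {S A : Type} [Fintype S] [Fintype A] [DecidableEq S]
    (M : CMP S A) (f : S → A → S)
    (hdet : ∀ s a s', M.P s a s' = if s' = f s a then 1 else 0)
    (π : Policy S A) {t k : ℕ} (h : Hist S A t) (c : Contin S A k)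
    (hne : contProb M π h c ≠ 0) : FeasibleCont f h c := by
  intro i
  by_contra hc
  apply hne
  unfold contProb
  apply Finset.prod_eq_zero (Finset.mem_univ i)
  rw [hdet, if_neg hc, mul_zero]


lemma key_regret {S A : Type} [Fintype S] [Fintype A] [DecidableEq S] [DecidableEq A]
    (M : CMP S A) (f : S → A → S)
    (hdet : ∀ s a s', M.P s a s' = if s' = f s a then 1 else 0)
    {t n : ℕ} (hn : 0 < n) (h : Hist S A t) (Hstar Hstar2 : ℝ) (astar : A)
    (πM : MPolicy S A)
    (hub1 : ∀ c : Contin S A n, FeasibleCont f h c →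
      entropy (visitFreq (histAppend h c)) ≤ Hstar)
    (hub2 : ∀ c : Contin S A n, FeasibleCont f h c → c.1 ⟨0, hn⟩ ≠ astar →
      entropy (visitFreq (histAppend h c)) ≤ Hstar2) :
    (Hstar - Hstar2) * (1 - πM.p t (lastState h) astar)
      ≤ Hstar - expEntFrom M πM.toPolicy n h := by
  cases n with
  | zero => omega
  | succ k =>
    set p := πM.p t (lastState h) astar with hp
    set cp : Contin S A (k + 1) → ℝ := fun c => contProb M πM.toPolicy h c with hcp
    have e1 : ∑ c : Contin S A (k + 1),
        (if c.1 0 = astar then (1 : ℝ) else 0) * cp c = p := by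
      simp only [hcp, contProb_eq_Gfun]
      rw [Gfun_first M πM t (lastState h) (fun a => if a = astar then (1 : ℝ) else 0)]
      simp [Finset.sum_ite_eq']
      exact hp.symm
    have e2 : ∑ c : Contin S A (k + 1), cp c = 1 := by
      simp only [hcp, contProb_eq_Gfun]
      have := Gfun_first M πM t (lastState h) (k := k) (fun _ => (1 : ℝ))
      simp only [one_mul, mul_one] at this
      rw [this, πM.sum_one]
    have e3 : ∑ c : Contin S A (k + 1),
        (if c.1 0 = astar then (0 : ℝ) else 1) * cp c = 1 - p := by
      have hsplit : ∀ c : Contin S A (k + 1),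
          (if c.1 0 = astar then (0 : ℝ) else 1) * cp c
            = cp c - (if c.1 0 = astar then (1 : ℝ) else 0) * cp c := by
        intro c; split_ifs <;> ring
      rw [Finset.sum_congr rfl (fun c _ => hsplit c), Finset.sum_sub_distrib, e2, e1]
    have hbound : ∀ c : Contin S A (k + 1),
        cp c * entropy (visitFreq (histAppend h c))
          ≤ (if c.1 0 = astar then (1 : ℝ) else 0) * cp c * Hstar
            + (if c.1 0 = astar then (0 : ℝ) else 1) * cp c * Hstar2 := by
      intro c
      by_cases hzero : cp c = 0
      · rw [hzero]; split_ifs <;> simp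
      · have hfe := contProb_feasible M f hdet πM.toPolicy h c hzero
        have hpos : 0 < cp c := lt_of_le_of_ne (contProb_nonneg M πM.toPolicy h c) (Ne.symm hzero)
        by_cases ha : c.1 0 = astar
        · simp only [if_pos ha, one_mul, zero_mul, add_zero]
          exact mul_le_mul_of_nonneg_left (hub1 c hfe) hpos.le
        · simp only [if_neg ha, one_mul, zero_mul, zero_add]
          exact mul_le_mul_of_nonneg_left
            (hub2 c hfe (show c.1 ⟨0, hn⟩ ≠ astar from ha)) hpos.le
    have hfinal : expEntFrom M πM.toPolicy (k + 1) h ≤ p * Hstar + (1 - p) * Hstar2 := by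
      calc expEntFrom M πM.toPolicy (k + 1) h
          = ∑ c : Contin S A (k + 1), cp c * entropy (visitFreq (histAppend h c)) := rfl
        _ ≤ ∑ c : Contin S A (k + 1),
            ((if c.1 0 = astar then (1 : ℝ) else 0) * cp c * Hstar
              + (if c.1 0 = astar then (0 : ℝ) else 1) * cp c * Hstar2) :=
            Finset.sum_le_sum (fun c _ => hbound c)
        _ = (∑ c : Contin S A (k + 1), (if c.1 0 = astar then (1 : ℝ) else 0) * cp c) * Hstar
            + (∑ c : Contin S A (k + 1), (if c.1 0 = astar then (0 : ℝ) else 1) * cp c)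
              * Hstar2 := by
            rw [Finset.sum_add_distrib, ← Finset.sum_mul, ← Finset.sum_mul]
        _ = p * Hstar + (1 - p) * Hstar2 := by rw [e1, e3]
    nlinarith [hfinal]

/-- in a CMP with deterministic transitions `f`, with `H*` the maximal
final entropy over feasible continuations of the prefix `h_t`, `a*` the unique optimal
first action, and `H*_2` the maximal final entropy over feasible continuations whose
first action is not `a*`, every Markovian policy `π_M` satisfies the regret-to-go
lower bound `R ≥ (H* − H*_2) · (1 − π_M(a*|s_t,t))`. -/
theorem markovian_regret_lower_bound
    {S A : Type} [Fintype S] [Fintype A] [Nonempty S] [Nonempty A]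
    [DecidableEq S] [DecidableEq A]
    (M : CMP S A) (f : S → A → S)
    (hdet : ∀ s a s', M.P s a s' = if s' = f s a then 1 else 0)
    (T t : ℕ) (hT : 1 ≤ T) (ht : t + 1 < T)
    (h : Hist S A t) (Hstar Hstar2 : ℝ)
    (hHstar : IsGreatest
      ((fun c : Contin S A (T - 1 - t) => entropy (visitFreq (histAppend h c))) ''
        {c | FeasibleCont f h c}) Hstar)
    (astar : A)
    (hopt : ∃ c : Contin S A (T - 1 - t), FeasibleCont f h c
        ∧ c.1 ⟨0, by omega⟩ = astar ∧ entropy (visitFreq (histAppend h c)) = Hstar)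
    (huniq : ∀ a : A, (∃ c : Contin S A (T - 1 - t), FeasibleCont f h c
        ∧ c.1 ⟨0, by omega⟩ = a ∧ entropy (visitFreq (histAppend h c)) = Hstar)
        → a = astar)
    (hother : ∃ c : Contin S A (T - 1 - t), FeasibleCont f h c
        ∧ c.1 ⟨0, by omega⟩ ≠ astar)
    (hHstar2 : IsGreatest
      ((fun c : Contin S A (T - 1 - t) => entropy (visitFreq (histAppend h c))) ''
        {c | FeasibleCont f h c ∧ c.1 ⟨0, by omega⟩ ≠ astar}) Hstar2)
    (πM : MPolicy S A) :
    (Hstar - Hstar2) * (1 - πM.p t (lastState h) astar)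
      ≤ Hstar - expEntFrom M πM.toPolicy (T - 1 - t) h := by
  have hn : 0 < T - 1 - t := by omega
  exact key_regret M f hdet hn h Hstar Hstar2 astar πM
    (fun c hc => hHstar.2 (Set.mem_image_of_mem _ hc))
    (fun c hc hne => hHstar2.2 (Set.mem_image_of_mem _ ⟨hc, hne⟩))
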